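/- Let f : ℝ^d → ℝ be twice continuously differentiable with ∇²f(w) ⪯ L·I for all w ∈ ℝ^d, where 0 < L < ∞. Let H̃ be a symmetric d×d matrix with H̃ ⪰ μ̃·I for some μ̃ > 0, let g ∈ ℝ^d, let 0 < α ≤ μ̃/L, and set w₊ = w − α H̃⁻¹ g and δ = g − ∇f(w). Then f(w₊) ≤ f(w) − (α/2)·∇f(w)ᵀ H̃⁻¹ ∇f(w) + (α/2)·δᵀ H̃⁻¹ δ. -/

import Mathlib

open Finset Matrix
open scoped RealInnerProductSpace

noncomputable section

abbrev Vec (d : ℕ) := EuclideanSpace ℝ (Fin d)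

lemma descent_aux {d : ℕ} (L : ℝ) (hL : 0 ≤ L)
    (f : Vec d → ℝ) (gradf : Vec d → Vec d) (Hf : Vec d → (Vec d →L[ℝ] Vec d))
    (hgrad : ∀ x, HasGradientAt f (gradf x) x)
    (hHf : ∀ x, HasFDerivAt gradf (Hf x) x)
    (hHub : ∀ x (v : Vec d), ⟪Hf x v, v⟫ ≤ L * ‖v‖ ^ 2)
    (w v : Vec d) :
    f (w + v) ≤ f w + ⟪gradf w, v⟫ + L / 2 * ‖v‖ ^ 2 := by
  have hline : ∀ t : ℝ, HasDerivAt (fun t : ℝ => w + t • v) v t := by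
    intro t
    simpa using ((hasDerivAt_id t).smul_const v).const_add w
  have hφ : ∀ t : ℝ, HasDerivAt (fun t : ℝ => f (w + t • v)) ⟪gradf (w + t • v), v⟫ t := by
    intro t
    have := ((hgrad (w + t • v)).hasFDerivAt.comp_hasDerivAt t (hline t))
    simp at this
    exact this
  have hφ' : ∀ t : ℝ, HasDerivAt (fun t : ℝ => ⟪gradf (w + t • v), v⟫)
      ⟪Hf (w + t • v) v, v⟫ t := by
    intro t
    have h1 : HasDerivAt (fun t : ℝ => gradf (w + t • v)) (Hf (w + t • v) v) t :=
      (hHf (w + t • v)).comp_hasDerivAt t (hline t)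
    have h2 := ((innerSL ℝ v).hasFDerivAt.comp_hasDerivAt t h1)
    simp only [innerSL_apply_apply] at h2
    have : ⟪v, Hf (w + t • v) v⟫ = ⟪Hf (w + t • v) v, v⟫ := real_inner_comm _ _
    rw [this] at h2
    exact h2.congr_of_eventuallyEq (Filter.Eventually.of_forall fun s => by
      simp only [Function.comp_apply, innerSL_apply_apply]; exact real_inner_comm _ _)
  -- Step A: derivative bound
  set c : ℝ := ⟪gradf w, v⟫ with hc
  have hA : ∀ t : ℝ, 0 ≤ t → ⟪gradf (w + t • v), v⟫ ≤ c + L * ‖v‖ ^ 2 * t := by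
    intro t ht
    have hmono : Monotone (fun t : ℝ => c + L * ‖v‖ ^ 2 * t - ⟪gradf (w + t • v), v⟫) := by
      apply monotone_of_deriv_nonneg
      · intro s
        exact (((hasDerivAt_id s).const_mul (L * ‖v‖ ^ 2)).const_add c |>.sub (hφ' s)).differentiableAt
      · intro s
        have hd : HasDerivAt (fun t : ℝ => c + L * ‖v‖ ^ 2 * t - ⟪gradf (w + t • v), v⟫)
            (L * ‖v‖ ^ 2 - ⟪Hf (w + s • v) v, v⟫) s := by
          have := (((hasDerivAt_id s).const_mul (L * ‖v‖ ^ 2)).const_add c).sub (hφ' s)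
          simp at this
          exact this
        rw [hd.deriv]
        linarith [hHub (w + s • v) v]
    have := hmono ht
    simp only [smul_eq_mul, mul_zero, add_zero, zero_smul] at this
    have h0 : c + L * ‖v‖ ^ 2 * 0 - ⟪gradf (w + (0:ℝ) • v), v⟫ = 0 := by
      simp [hc]
    linarith [hmono ht, h0.symm ▸ (hmono ht)]
  -- Step B
  have hB : MonotoneOn (fun t : ℝ => f w + c * t + L * ‖v‖ ^ 2 * t ^ 2 / 2 - f (w + t • v))
      (Set.Ici (0 : ℝ)) := by
    have hdiff : ∀ s : ℝ, HasDerivAt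
        (fun t : ℝ => f w + c * t + L * ‖v‖ ^ 2 * t ^ 2 / 2 - f (w + t • v))
        (c + L * ‖v‖ ^ 2 * s - ⟪gradf (w + s • v), v⟫) s := by
      intro s
      have h1 : HasDerivAt (fun t : ℝ => f w + c * t) c s := by
        simpa using ((hasDerivAt_id s).const_mul c).const_add (f w)
      have h2 : HasDerivAt (fun t : ℝ => L * ‖v‖ ^ 2 * t ^ 2 / 2) (L * ‖v‖ ^ 2 * s) s := by
        have := ((hasDerivAt_pow 2 s).const_mul (L * ‖v‖ ^ 2)).div_const 2
        refine this.congr_deriv ?_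
        norm_num
        ring
      have := (h1.add h2).sub (hφ s)
      exact this
    apply monotoneOn_of_deriv_nonneg (convex_Ici 0)
    · intro s hs
      exact (hdiff s).differentiableAt.continuousAt.continuousWithinAt
    · intro s hs
      exact (hdiff s).differentiableAt.differentiableWithinAt
    · intro s hs
      rw [interior_Ici] at hs
      rw [(hdiff s).deriv]
      have := hA s (le_of_lt hs)
      linarith
  have h01 := hB (Set.self_mem_Ici) (Set.mem_Ici.2 (zero_le_one)) zero_le_one
  simp only [mul_zero, add_zero, zero_smul, mul_one, one_pow, one_smul, zero_pow] at h01
  simp only [hc] at h01 ⊢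
  nlinarith [h01]

/-- The continuous linear operator on Euclidean space associated with a matrix. -/
noncomputable def toOp {d : ℕ} (A : Matrix (Fin d) (Fin d) ℝ) : Vec d →L[ℝ] Vec d :=
  LinearMap.toContinuousLinearMap (Matrix.toEuclideanLin A)

/-- One-step descent bound for an inexact Newton-type step with a
positive-definite Hessian approximation. -/
theorem descent_lemma_inexact_newton {d : ℕ}
    (L μt α : ℝ) (hL : 0 < L) (hμt : 0 < μt)
    (f : Vec d → ℝ) (gradf : Vec d → Vec d) (Hf : Vec d → (Vec d →L[ℝ] Vec d))
    (hsmooth : ContDiff ℝ 2 f)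
    (hgrad : ∀ x, HasGradientAt f (gradf x) x)
    (hHf : ∀ x, HasFDerivAt gradf (Hf x) x)
    (hHub : ∀ x (v : Vec d), ⟪Hf x v, v⟫ ≤ L * ‖v‖ ^ 2)
    (Ht : Matrix (Fin d) (Fin d) ℝ) (hHtsym : Ht.IsSymm)
    (hHtlb : ∀ v : Vec d, μt * ‖v‖ ^ 2 ≤ ⟪toOp Ht v, v⟫)
    (g : Vec d) (hα0 : 0 < α) (hα : α ≤ μt / L) (w : Vec d) :
    f (w - α • toOp Ht⁻¹ g) ≤ f w - (α / 2) * ⟪toOp Ht⁻¹ (gradf w), gradf w⟫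
      + (α / 2) * ⟪toOp Ht⁻¹ (g - gradf w), g - gradf w⟫ := by
  -- Ht is positive definite
  have hherm : Ht.IsHermitian := by
    rwa [Matrix.IsHermitian, Matrix.conjTranspose_eq_transpose_of_trivial]
  have hinner : ∀ A : Matrix (Fin d) (Fin d) ℝ, ∀ v : Vec d,
      ⟪toOp A v, v⟫ = star ((WithLp.equiv 2 _) v) ⬝ᵥ (A *ᵥ (WithLp.equiv 2 _) v) := by
    intro A v
    simp [toOp, Matrix.toEuclideanLin_apply, PiLp.inner_apply, dotProduct, mul_comm]
  have hPD : Ht.PosDef := by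
    refine posDef_iff_dotProduct_mulVec.2 ⟨hherm, fun x hx => ?_⟩
    set v : Vec d := (WithLp.equiv 2 _).symm x with hv
    have h1 := hHtlb v
    have hvne : v ≠ 0 := by
      simpa [hv] using hx
    have hnorm : 0 < ‖v‖ := norm_pos_iff.2 hvne
    have : (0:ℝ) < μt * ‖v‖ ^ 2 := by positivity
    calc (0:ℝ) < μt * ‖v‖ ^ 2 := this
      _ ≤ ⟪toOp Ht v, v⟫ := h1
      _ = star x ⬝ᵥ Ht *ᵥ x := by rw [hinner]; rfl
  have hPDinv : Ht⁻¹.PosDef := hPD.inv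
  -- symmetry of toOp Ht⁻¹
  have hsymP : ∀ u v : Vec d, ⟪toOp Ht⁻¹ u, v⟫ = ⟪u, toOp Ht⁻¹ v⟫ := by
    intro u v
    exact (Matrix.isHermitian_iff_isSymmetric.1 hPDinv.isHermitian) u v
  -- toOp Ht ∘ toOp Ht⁻¹ = id
  have hinv : ∀ x : Vec d, toOp Ht (toOp Ht⁻¹ x) = x := by
    intro x
    simp only [toOp, LinearMap.coe_toContinuousLinearMap', Matrix.toEuclideanLin_apply]
    simp [Matrix.mulVec_mulVec, Matrix.mul_nonsing_inv _ (Matrix.isUnit_iff_isUnit_det _ |>.1 hPD.isUnit)]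
  set P : Vec d →L[ℝ] Vec d := toOp Ht⁻¹ with hP
  set G : Vec d := gradf w with hG
  set p : Vec d := P g with hp
  -- lower bound for ⟪P g, g⟫
  have hpg : μt * ‖p‖ ^ 2 ≤ ⟪P g, g⟫ := by
    have h1 := hHtlb p
    have h2 : toOp Ht p = g := by rw [hp]; exact hinv g
    rw [h2] at h1
    calc μt * ‖p‖ ^ 2 ≤ ⟪g, p⟫ := h1
      _ = ⟪P g, g⟫ := by rw [real_inner_comm]
  -- descent lemma with v = -(α • p)
  have hdesc := descent_aux L hL.le f gradf Hf hgrad hHf hHub w (-(α • p))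
  have hwe : w + -(α • p) = w - α • p := by abel
  rw [hwe] at hdesc
  have hGv : ⟪G, -(α • p)⟫ = -(α * ⟪G, p⟫) := by
    rw [inner_neg_right, real_inner_smul_right]
  have hnv : ‖-(α • p)‖ ^ 2 = α ^ 2 * ‖p‖ ^ 2 := by
    rw [norm_neg, norm_smul]
    simp [abs_of_pos hα0, mul_pow]
  rw [hGv, hnv] at hdesc
  -- inner product expansions
  have hexp : ⟪P (g - G), g - G⟫ = ⟪P g, g⟫ - 2 * ⟪P g, G⟫ + ⟪P G, G⟫ := by
    have h1 : ⟪P G, g⟫ = ⟪P g, G⟫ := by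
      rw [hsymP, real_inner_comm]
    simp only [map_sub, inner_sub_left, inner_sub_right, h1]
    ring
  have hGp : ⟪G, p⟫ = ⟪P g, G⟫ := by rw [hp, real_inner_comm]
  have hαL : α * L ≤ μt := by
    exact (le_div_iff₀ hL).1 hα
  have hkey : α * L * ‖p‖ ^ 2 ≤ ⟪P g, g⟫ := le_trans (by nlinarith [sq_nonneg ‖p‖]) hpg
  rw [hexp]
  rw [hGp] at hdesc
  nlinarith [hdesc, hα0.le]
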